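/- arXiv:1310.7288 — 5 statements merged into one kernel-verified Lean document; each statement's English description precedes it below -/
import Mathlib

section
/- For any binary string s of length n that begins with a maximal run of length k (i.e., s_0 = s_1 = ... = s_{k-1} and, if k < n, s_k ≠ s_0), the number of distinct subsequences of s of length m (for m ≥ 1) equals the number of distinct subsequences of length m−1 of the suffix s[1:n] plus the number of distinct subsequences of length m−1 of the suffix s[k+1:n] (the latter term being 0 if k = n). -/
/-- Number of distinct subsequences of `s` of length `m`. -/
def countM (s : List Bool) (m : ℕ) : ℕ :=
  ((s.sublists.filter (fun t => t.length == m)).dedup).length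

def subsM (s : List Bool) (m : ℕ) : Finset (List Bool) :=
  (s.sublists.filter (fun t => t.length == m)).toFinset

lemma countM_eq (s : List Bool) (m : ℕ) : countM s m = (subsM s m).card :=
  (List.card_toFinset _).symm

lemma mem_subsM {s t : List Bool} {m : ℕ} : t ∈ subsM s m ↔ List.Sublist t s ∧ t.length = m := by
  simp [subsM, List.mem_sublists]

lemma cons_inj (a : Bool) : Function.Injective (fun t : List Bool => a :: t) := by
  intro x y h; simpa using h

lemma skipRun (a c : Bool) (hca : c ≠ a) :
    ∀ (k : ℕ) (s t : List Bool), (∀ i < k, s.getD i false = a) → List.Sublist (c :: t) s →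
      List.Sublist (c :: t) (s.drop k) := by
  intro k
  induction k with
  | zero => intro s t _ h; simpa using h
  | succ k ih =>
    intro s t hrun hsub
    cases s with
    | nil => simp at hsub
    | cons x s' =>
      have hx : x = a := hrun 0 (Nat.succ_pos k)
      have h' : List.Sublist (c :: t) s' := by
        cases hsub with
        | cons _ h => exact h
        | cons_cons _ h => exact absurd hx hca
      rw [List.drop_succ_cons]
      exact ih s' t (fun i hi => hrun (i+1) (by omega)) h'

theorem stmt_0 (n k m : ℕ) (s : List Bool) (hs : s.length = n)
    (hk1 : 1 ≤ k) (hkn : k ≤ n) (hm : 1 ≤ m)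
    (hrun : ∀ i < k, s.getD i false = s.getD 0 false)
    (hmax : k < n → s.getD k false ≠ s.getD 0 false) :
    countM s m =
      countM (s.drop 1) (m - 1) +
        (if k = n then 0 else countM (s.drop (k + 1)) (m - 1)) := by
  subst hs
  obtain ⟨a, s', rfl⟩ : ∃ a s', s = a :: s' := by
    cases s with
    | nil => simp at hkn; omega
    | cons a s' => exact ⟨a, s', rfl⟩
  have ha0 : (a :: s').getD 0 false = a := rfl
  rw [ha0] at hrun hmax
  by_cases hke : k = (a :: s').length
  · -- whole string is a run of a's
    have hall : ∀ x ∈ a :: s', x = a := by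
      intro x hx
      obtain ⟨i, hi, rfl⟩ := List.mem_iff_getElem.mp hx
      have := hrun i (by omega)
      rwa [List.getD_eq_getElem _ _ hi] at this
    have hset : subsM (a :: s') m = (subsM s' (m-1)).image (fun t => a :: t) := by
      ext t
      simp only [mem_subsM, Finset.mem_image]
      constructor
      · rintro ⟨hsub, hlen⟩
        cases t with
        | nil => simp at hlen; omega
        | cons c u =>
          have hc : c = a := hall c (hsub.subset List.mem_cons_self)
          subst hc
          exact ⟨u, ⟨List.cons_sublist_cons.mp hsub, by simp at hlen ⊢; omega⟩, rfl⟩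
      · rintro ⟨u, ⟨hu, hlen⟩, rfl⟩
        exact ⟨List.cons_sublist_cons.mpr hu, by simp; omega⟩
    rw [if_pos hke, countM_eq, countM_eq, hset,
      Finset.card_image_of_injective _ (cons_inj a)]
    simp
  · -- k < length, bit at k is !a
    have hklt : k < (a :: s').length := lt_of_le_of_ne hkn hke
    have hgetk : (a :: s')[k] = !a := by
      have := hmax hklt
      rw [List.getD_eq_getElem _ _ hklt] at this
      cases h : (a :: s')[k] <;> cases a <;> simp_all
    have hset : subsM (a :: s') m =
        (subsM s' (m-1)).image (fun t => a :: t) ∪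
        (subsM ((a :: s').drop (k+1)) (m-1)).image (fun t => (!a) :: t) := by
      ext t
      simp only [mem_subsM, Finset.mem_union, Finset.mem_image]
      constructor
      · rintro ⟨hsub, hlen⟩
        cases t with
        | nil => simp at hlen; omega
        | cons c u =>
          by_cases hc : c = a
          · subst hc
            exact Or.inl ⟨u, ⟨List.cons_sublist_cons.mp hsub, by simp at hlen ⊢; omega⟩, rfl⟩
          · have hc' : c = !a := by cases c <;> cases a <;> simp_all
            subst hc'
            have h1 := skipRun a (!a) hc k (a :: s') u hrun hsub
            rw [List.drop_eq_getElem_cons hklt, hgetk] at h1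
            exact Or.inr ⟨u, ⟨List.cons_sublist_cons.mp h1, by simp at hlen ⊢; omega⟩, rfl⟩
      · rintro (⟨u, ⟨hu, hlen⟩, rfl⟩ | ⟨u, ⟨hu, hlen⟩, rfl⟩)
        · exact ⟨List.cons_sublist_cons.mpr hu, by simp; omega⟩
        · refine ⟨?_, by simp; omega⟩
          have h1 : List.Sublist ((!a) :: u) ((a :: s')[k] :: (a :: s').drop (k+1)) := by
            rw [hgetk]; exact List.cons_sublist_cons.mpr hu
          rw [← List.drop_eq_getElem_cons hklt] at h1
          exact h1.trans (List.drop_sublist k (a :: s'))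
    have hdisj : Disjoint ((subsM s' (m-1)).image (fun t => a :: t))
        ((subsM ((a :: s').drop (k+1)) (m-1)).image (fun t => (!a) :: t)) := by
      rw [Finset.disjoint_left]
      rintro t ht1 ht2
      simp only [Finset.mem_image] at ht1 ht2
      obtain ⟨u, _, rfl⟩ := ht1
      obtain ⟨v, _, hv⟩ := ht2
      simp at hv
    rw [if_neg hke, countM_eq, countM_eq, countM_eq, hset,
      Finset.card_union_of_disjoint hdisj,
      Finset.card_image_of_injective _ (cons_inj a),
      Finset.card_image_of_injective _ (cons_inj (!a))]
    simp
end

section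
/- For any binary string s of length n ≥ 1 beginning with a maximal run of length k, the total number of distinct subsequences of s (including the empty subsequence) equals 1 plus the total number of distinct subsequences of s[1:n] plus the total number of distinct subsequences of s[k+1:n] (the last term being 0 if k = n). -/
/-- Total number of distinct subsequences of `s` (including the empty subsequence). -/
def countAll (s : List Bool) : ℕ := (s.sublists.dedup).length

lemma countAll_eq_card (s : List Bool) : countAll s = s.sublists.toFinset.card :=
  (List.card_toFinset _).symm

lemma sublist_cons_ne {c b : Bool} (h : c ≠ b) {u l : List Bool}
    (hs : (c :: u).Sublist (b :: l)) : (c :: u).Sublist l := by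
  cases hs with
  | cons _ h' => exact h'
  | cons_cons => exact absurd rfl h

lemma sublist_replicate_append {c b : Bool} (h : c ≠ b) (k : ℕ) {u l : List Bool}
    (hs : (c :: u).Sublist (List.replicate k b ++ l)) : (c :: u).Sublist l := by
  induction k with
  | zero => simpa using hs
  | succ k ih =>
      exact ih (sublist_cons_ne h (by simpa [List.replicate_succ] using hs))

theorem stmt_1 (n k : ℕ) (s : List Bool) (hs : s.length = n) (hn : 1 ≤ n)
    (hk1 : 1 ≤ k) (hkn : k ≤ n)
    (hrun : ∀ i < k, s.getD i false = s.getD 0 false)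
    (hmax : k < n → s.getD k false ≠ s.getD 0 false) :
    countAll s =
      1 + countAll (s.drop 1) +
        (if k = n then 0 else countAll (s.drop (k + 1))) := by
  have hne : s ≠ [] := by
    intro h; rw [h] at hs; simp at hs; omega
  obtain ⟨b, m, rfl⟩ := List.exists_cons_of_ne_nil hne
  have hb : (b :: m).getD 0 false = b := rfl
  rw [hb] at hrun hmax
  have hm : (b :: m).drop 1 = m := rfl
  -- take k is a replicate
  have hrep : (b :: m).take k = List.replicate k b := by
    rw [List.eq_replicate_iff]
    constructor
    · rw [List.length_take]
      omega
    · intro x hx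
      obtain ⟨i, hi, hix⟩ := List.mem_iff_getElem.mp hx
      have hik : i < k := by
        have := (show ((b :: m).take k).length = min k (b :: m).length from List.length_take) ▸ hi
        omega
      have hin : i < (b :: m).length := by omega
      have := hrun i hik
      rw [List.getD_eq_getElem _ _ hin] at this
      rw [← hix, List.getElem_take]
      simpa using this
  by_cases hkeq : k = n
  · -- k = n : whole string is a run
    subst hkeq
    have hrepall : b :: m = List.replicate k b := by
      have := hrep
      rwa [List.take_of_length_le (le_of_eq hs)] at this
    rw [if_pos rfl]
    rw [countAll_eq_card, countAll_eq_card, hm]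
    have hset : (b :: m).sublists.toFinset =
        insert ([] : List Bool) (m.sublists.toFinset.image (b :: ·)) := by
      ext t
      simp only [List.mem_toFinset, List.mem_sublists, Finset.mem_insert, Finset.mem_image]
      constructor
      · intro ht
        cases t with
        | nil => exact Or.inl rfl
        | cons c u =>
            right
            have hc : c = b := by
              have hcmem : c ∈ b :: m := ht.subset (by simp)
              rw [hrepall] at hcmem
              exact List.eq_of_mem_replicate hcmem
            subst hc
            exact ⟨u, List.cons_sublist_cons.mp ht, rfl⟩
      · rintro (rfl | ⟨u, hu, rfl⟩)
        · exact List.nil_sublist _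
        · exact List.cons_sublist_cons.mpr hu
    rw [hset, Finset.card_insert_of_notMem (by simp), Finset.card_image_of_injective _
      (fun x y hxy => by simpa using hxy)]
    omega
  · -- k < n
    have hklt : k < n := lt_of_le_of_ne hkn hkeq
    simp only [if_neg hkeq]
    -- structure of drop k
    have hdne : (b :: m).drop k ≠ [] := by
      intro h
      have := congrArg List.length h
      simp [hs] at this
      omega
    obtain ⟨c, r, hcr⟩ := List.exists_cons_of_ne_nil hdne
    have hkn' : k < (b :: m).length := by omega
    have hcb : c ≠ b := by
      have := hmax hklt
      rw [List.getD_eq_getElem _ _ hkn'] at this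
      have hc : (b :: m)[k] = c := by
        have h2 : ((b :: m).drop k)[0]'(by rw [hcr]; simp) = c := by simp [hcr]
        simpa using h2
      rw [hc] at this
      exact fun h => this h
    have hr : (b :: m).drop (k + 1) = r := by
      rw [← (show List.drop 1 (List.drop k (b :: m)) = List.drop (k + 1) (b :: m) from List.drop_drop), hcr]
      rfl
    have hsplit : b :: m = List.replicate k b ++ (c :: r) := by
      conv_lhs => rw [← List.take_append_drop k (b :: m), hrep, hcr]
    rw [countAll_eq_card, countAll_eq_card, countAll_eq_card, hm, hr]
    have hset : (b :: m).sublists.toFinset =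
        insert ([] : List Bool)
          (m.sublists.toFinset.image (b :: ·) ∪ r.sublists.toFinset.image (c :: ·)) := by
      ext t
      simp only [List.mem_toFinset, List.mem_sublists, Finset.mem_insert, Finset.mem_union,
        Finset.mem_image]
      constructor
      · intro ht
        cases t with
        | nil => exact Or.inl rfl
        | cons d u =>
            right
            by_cases hdb : d = b
            · subst hdb
              exact Or.inl ⟨u, List.cons_sublist_cons.mp ht, rfl⟩
            · have hdc : d = c := by
                cases b <;> cases c <;> cases d <;> simp_all
              subst hdc
              have : (d :: u).Sublist (d :: r) := by
                rw [hsplit] at ht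
                exact sublist_replicate_append hdb k ht
              exact Or.inr ⟨u, List.cons_sublist_cons.mp this, rfl⟩
      · rintro (rfl | ⟨u, hu, rfl⟩ | ⟨u, hu, rfl⟩)
        · exact List.nil_sublist _
        · exact List.cons_sublist_cons.mpr hu
        · have h1 : (c :: u).Sublist (c :: r) := List.cons_sublist_cons.mpr hu
          rw [hsplit]
          exact h1.trans (List.sublist_append_right _ _)
    rw [hset, Finset.card_insert_of_notMem (by simp),
      Finset.card_union_of_disjoint (by
        rw [Finset.disjoint_left]
        intro t h1 h2
        obtain ⟨u, _, rfl⟩ := Finset.mem_image.mp h1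
        obtain ⟨v, _, hv⟩ := Finset.mem_image.mp h2
        simp only [List.cons.injEq] at hv
        exact hcb hv.1 ),
      Finset.card_image_of_injective _ (fun x y hxy => by simpa using hxy),
      Finset.card_image_of_injective _ (fun x y hxy => by simpa using hxy)]
    omega
end

section
/- For any binary string s, the number of distinct subsequences of s obtained by deleting exactly one bit equals the number of maximal runs of s. -/
/-- Number of maximal runs in a binary string. -/
def runs (s : List Bool) : ℕ := (s.destutter (· ≠ ·)).length

/-- The finset of delete-one subsequences. -/
def delSet (s : List Bool) : Finset (List Bool) :=
  (s.sublists.filter (fun t => t.length == s.length - 1)).toFinset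

lemma mem_delSet {s u : List Bool} :
    u ∈ delSet s ↔ u.Sublist s ∧ u.length = s.length - 1 := by
  simp [delSet, List.mem_sublists, and_comm]

lemma countM_eq_card (s : List Bool) : countM s (s.length - 1) = (delSet s).card := by
  rw [countM, delSet, List.card_toFinset]

lemma delSet_cons (a : Bool) (t : List Bool) (ht : t ≠ []) :
    delSet (a :: t) = insert t ((delSet t).image (a :: ·)) := by
  ext u
  simp only [mem_delSet, Finset.mem_insert, Finset.mem_image]
  constructor
  · rintro ⟨h, hl⟩
    simp only [List.length_cons, Nat.add_sub_cancel] at hl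
    rcases List.sublist_cons_iff.mp h with h' | ⟨r, rfl, hr⟩
    · exact Or.inl (h'.eq_of_length hl)
    · refine Or.inr ⟨r, ⟨hr, ?_⟩, rfl⟩
      simp only [List.length_cons] at hl
      omega
  · rintro (rfl | ⟨v, ⟨hv, hvl⟩, rfl⟩)
    · exact ⟨List.sublist_cons_self a u, by simp⟩
    · refine ⟨(hv.cons_cons a), ?_⟩
      have : t.length ≠ 0 := by simp [ht]
      simp only [List.length_cons]
      omega

lemma tail_mem_delSet (a : Bool) (t : List Bool) : t ∈ delSet (a :: t) := by
  rw [mem_delSet]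
  exact ⟨List.sublist_cons_self a t, by simp⟩

theorem stmt_5 (s : List Bool) (hs : s ≠ []) :
    countM s (s.length - 1) = runs s := by
  induction s with
  | nil => exact absurd rfl hs
  | cons a t ih =>
    cases t with
    | nil => cases a <;> rfl
    | cons b l =>
      have ht : (b :: l) ≠ [] := by simp
      have hcard : countM (b :: l) ((b :: l).length - 1) = runs (b :: l) := ih ht
      rw [countM_eq_card, delSet_cons a _ ht, ← countM_eq_card] at *
      have hinj : Function.Injective (a :: · : List Bool → List Bool) := by
        intro x y h; simpa using h
      have himg : ((delSet (b :: l)).image (a :: ·)).card = (delSet (b :: l)).card :=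
        Finset.card_image_of_injective _ hinj
      have hmem : (b :: l) ∈ (delSet (b :: l)).image (a :: ·) ↔ a = b := by
        simp only [Finset.mem_image]
        constructor
        · rintro ⟨v, _, hv⟩
          exact (List.cons_eq_cons.mp hv).1
        · rintro rfl
          refine ⟨l, ?_, rfl⟩
          rw [mem_delSet]
          exact ⟨List.sublist_cons_self _ l, by simp⟩
      by_cases hab : a = b
      · rw [Finset.insert_eq_self.mpr (hmem.mpr hab), himg, ← countM_eq_card, hcard]
        subst hab
        simp [runs, List.destutter_cons_cons, List.destutter]
      · rw [Finset.card_insert_of_notMem (fun h => hab (hmem.mp h)), himg,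
          ← countM_eq_card, hcard]
        have : runs (a :: b :: l) = runs (b :: l) + 1 := by
          simp [runs, List.destutter_cons_cons, hab, List.destutter]
        omega
end

section
/- Let D(n) be the expected total number of distinct subsequences (including the empty one) of a uniformly random binary string of length n. Then D(n) = 1/2 + (3/2)·D(n−1) for all n ≥ 1. -/
/-- Expected total number of distinct subsequences of a uniformly random
binary string of length `n`. -/
noncomputable def D (n : ℕ) : ℚ :=
  (∑ f : Fin n → Bool, (countAll (List.ofFn f) : ℚ)) / 2 ^ n

/-- The finset of sublists. -/
def S (t : List Bool) : Finset (List Bool) := t.sublists.toFinset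

lemma countAll_eq (t : List Bool) : countAll t = (S t).card := by
  rw [countAll, S, List.card_toFinset]

lemma mem_S {u t : List Bool} : u ∈ S t ↔ u.Sublist t := by
  simp [S, List.mem_sublists]

lemma S_cons (b : Bool) (t : List Bool) :
    S (b :: t) = S t ∪ (S t).image (b :: ·) := by
  ext u
  simp only [Finset.mem_union, Finset.mem_image, mem_S, List.sublist_cons_iff]
  constructor
  · rintro (h | ⟨r, rfl, hr⟩)
    · exact Or.inl h
    · exact Or.inr ⟨r, hr, rfl⟩
  · rintro (h | ⟨r, hr, rfl⟩)
    · exact Or.inl h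
    · exact Or.inr ⟨r, rfl, hr⟩

lemma inter_eq (b : Bool) (t : List Bool) :
    S t ∩ (S t).image (b :: ·) = (S t).filter (fun u => u.head? = some b) := by
  ext u
  simp only [Finset.mem_inter, Finset.mem_image, Finset.mem_filter, mem_S]
  constructor
  · rintro ⟨h, r, hr, rfl⟩
    exact ⟨h, rfl⟩
  · rintro ⟨h, hh⟩
    cases u with
    | nil => simp at hh
    | cons c v =>
      simp only [List.head?_cons, Option.some.injEq] at hh
      subst hh
      refine ⟨h, v, ?_, rfl⟩
      exact (List.sublist_cons_self c v).trans h

lemma card_S_cons (b : Bool) (t : List Bool) :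
    (S (b :: t)).card + ((S t).filter (fun u => u.head? = some b)).card
      = 2 * (S t).card := by
  have hinj : Function.Injective (fun u : List Bool => b :: u) := fun x y h => by
    simpa using h
  have himg : ((S t).image (b :: ·)).card = (S t).card :=
    Finset.card_image_of_injective _ hinj
  have := Finset.card_union_add_card_inter (S t) ((S t).image (b :: ·))
  rw [← S_cons, inter_eq] at this
  omega

lemma filter_sum (t : List Bool) :
    ((S t).filter (fun u => u.head? = some false)).card
      + ((S t).filter (fun u => u.head? = some true)).card
      = (S t).card - 1 := by
  have hdisj : Disjoint ((S t).filter (fun u => u.head? = some false))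
      ((S t).filter (fun u => u.head? = some true)) := by
    rw [Finset.disjoint_left]
    intro u h1 h2
    simp only [Finset.mem_filter] at h1 h2
    rw [h1.2] at h2
    simp at h2
  have hunion : (S t).filter (fun u => u.head? = some false)
      ∪ (S t).filter (fun u => u.head? = some true) = (S t).erase [] := by
    ext u
    cases u with
    | nil => simp
    | cons c v =>
      simp only [Finset.mem_union, Finset.mem_filter, Finset.mem_erase, List.head?_cons,
        Option.some.injEq, ne_eq, reduceCtorEq, not_false_eq_true, true_and]
      cases c <;> simp <;> tauto
  have hmem : ([] : List Bool) ∈ S t := mem_S.2 (List.nil_sublist t)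
  rw [← Finset.card_union_of_disjoint hdisj, hunion, Finset.card_erase_of_mem hmem]

lemma key (t : List Bool) :
    countAll (false :: t) + countAll (true :: t) = 3 * countAll t + 1 := by
  have h0 := card_S_cons false t
  have h1 := card_S_cons true t
  have h2 := filter_sum t
  have hpos : 1 ≤ (S t).card :=
    Finset.card_pos.2 ⟨[], mem_S.2 (List.nil_sublist t)⟩
  simp only [countAll_eq]
  omega

theorem stmt_10 (n : ℕ) (hn : 1 ≤ n) :
    D n = 1 / 2 + (3 / 2) * D (n - 1) := by
  obtain ⟨m, rfl⟩ := Nat.exists_eq_add_of_le hn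
  rw [Nat.add_sub_cancel_left, Nat.add_comm 1 m]
  have hsum : (∑ f : Fin (m + 1) → Bool, (countAll (List.ofFn f) : ℚ))
      = 3 * (∑ g : Fin m → Bool, (countAll (List.ofFn g) : ℚ)) + 2 ^ m := by
    rw [← (Fin.consEquiv (fun _ : Fin (m + 1) => Bool)).sum_comp, Fintype.sum_prod_type]
    have hcons : ∀ (b : Bool) (g : Fin m → Bool),
        List.ofFn ((Fin.consEquiv (fun _ : Fin (m + 1) => Bool)) (b, g)) = b :: List.ofFn g := by
      intro b g
      rw [List.ofFn_succ]
      rfl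
    rw [Fintype.sum_bool]
    simp only [hcons]
    rw [← Finset.sum_add_distrib]
    have h3 : ∀ g : Fin m → Bool,
        (countAll (true :: List.ofFn g) : ℚ) + (countAll (false :: List.ofFn g) : ℚ)
          = 3 * (countAll (List.ofFn g) : ℚ) + 1 := by
      intro g
      have hk := key (List.ofFn g)
      have : (countAll (false :: List.ofFn g) : ℚ) + (countAll (true :: List.ofFn g) : ℚ)
          = 3 * (countAll (List.ofFn g) : ℚ) + 1 := by exact_mod_cast congrArg (Nat.cast : ℕ → ℚ) hk
      linarith
    rw [Finset.sum_congr rfl (fun g _ => h3 g), Finset.sum_add_distrib,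
      ← Finset.mul_sum, Finset.sum_const]
    simp [mul_comm]
  rw [D, D, hsum]
  have h2 : (2 : ℚ) ^ m ≠ 0 := by positivity
  field_simp
  ring
end

section
/- Define integers T(n,m) by T(n,0) = 2^n, T(n,n) = 2^n, and T(n,m) = 2·T(n−1,m−1) + T(n−1,m) for 1 ≤ m ≤ n−1. Then for every fixed m ≥ 0, T(n, n−m)/2^n is given by a polynomial in n of degree m whose leading coefficient is 1/(2^m · m!). -/
open Polynomial Finset

noncomputable def cc (j : ℕ) : ℚ := 1 / (2 ^ j * j.factorial)

noncomputable def ee (m : ℕ) (x : ℚ) : ℚ :=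
  ∑ j ∈ Finset.range (m + 1), cc j * (ascPochhammer ℚ j).eval (x - m)

noncomputable def QQ (m : ℕ) : Polynomial ℚ :=
  ∑ j ∈ Finset.range (m + 1), Polynomial.C (cc j) * (ascPochhammer ℚ j).comp (X - Polynomial.C (m : ℚ))

lemma QQ_eval (m : ℕ) (x : ℚ) : (QQ m).eval x = ee m x := by
  simp [QQ, ee, Polynomial.eval_finset_sum]

lemma asc_diff (j : ℕ) (y : ℚ) :
    (ascPochhammer ℚ (j + 1)).eval y
      = (ascPochhammer ℚ (j + 1)).eval (y - 1) + (j + 1) * (ascPochhammer ℚ j).eval y := by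
  have h1 : (ascPochhammer ℚ (j + 1)).eval y = (ascPochhammer ℚ j).eval y * (y + j) := by
    rw [ascPochhammer_succ_right]; simp
  have h2 : (ascPochhammer ℚ (j + 1)).eval (y - 1) = (y - 1) * (ascPochhammer ℚ j).eval y := by
    rw [ascPochhammer_succ_left]; simp [Polynomial.eval_comp]
  rw [h1, h2]; ring

lemma ee_self (m : ℕ) : ee m (m : ℚ) = 1 := by
  unfold ee
  rw [Finset.sum_eq_single 0]
  · simp [cc]
  · intro j _ hj
    simp [ascPochhammer_eval_zero, hj]
  · simp

lemma ee_succ (m : ℕ) (x : ℚ) : ee (m + 1) x = ee (m + 1) (x - 1) + 2⁻¹ * ee m (x - 1) := by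
  unfold ee
  have harg : x - 1 - ((m : ℚ) + 1) = x - ((m : ℚ) + 1) - 1 := by ring
  have harg2 : x - 1 - (m : ℚ) = x - ((m : ℚ) + 1) := by ring
  push_cast
  rw [harg, harg2, Finset.mul_sum]
  rw [Finset.sum_range_succ' (fun j => cc j * (ascPochhammer ℚ j).eval (x - ((m:ℚ)+1)))]
  rw [Finset.sum_range_succ' (fun j => cc j * (ascPochhammer ℚ j).eval (x - ((m:ℚ)+1) - 1))]
  have key : ∀ i : ℕ, cc (i+1) * (ascPochhammer ℚ (i+1)).eval (x - ((m:ℚ)+1))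
      = cc (i+1) * (ascPochhammer ℚ (i+1)).eval (x - ((m:ℚ)+1) - 1)
        + 2⁻¹ * (cc i * (ascPochhammer ℚ i).eval (x - ((m:ℚ)+1))) := by
    intro i
    rw [asc_diff i (x - ((m:ℚ)+1))]
    have hcc : cc (i+1) * ((i : ℚ) + 1) = 2⁻¹ * cc i := by
      simp only [cc, Nat.factorial_succ, pow_succ]
      push_cast
      have h1 : (i.factorial : ℚ) ≠ 0 := by positivity
      have h2 : ((i:ℚ) + 1) ≠ 0 := by positivity
      field_simp
    linear_combination ((ascPochhammer ℚ i).eval (x - ((m:ℚ)+1))) * hcc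
  calc (∑ i ∈ Finset.range (m + 1), cc (i+1) * (ascPochhammer ℚ (i+1)).eval (x - ((m:ℚ)+1)))
        + cc 0 * (ascPochhammer ℚ 0).eval (x - ((m:ℚ)+1))
      = (∑ i ∈ Finset.range (m + 1), (cc (i+1) * (ascPochhammer ℚ (i+1)).eval (x - ((m:ℚ)+1) - 1)
          + 2⁻¹ * (cc i * (ascPochhammer ℚ i).eval (x - ((m:ℚ)+1))))) + cc 0 * (ascPochhammer ℚ 0).eval (x - ((m:ℚ)+1)) := by
        rw [Finset.sum_congr rfl (fun i _ => key i)]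
    _ = _ := by
        rw [Finset.sum_add_distrib]
        simp [ascPochhammer_zero]
        ring

lemma QQ_term_natDegree (m j : ℕ) :
    ((ascPochhammer ℚ j).comp (X - Polynomial.C (m : ℚ))).natDegree = j := by
  rw [Polynomial.natDegree_comp, ascPochhammer_natDegree, natDegree_X_sub_C, mul_one]

lemma QQ_coeff_top (m : ℕ) : (QQ m).coeff m = cc m := by
  unfold QQ
  rw [Polynomial.finset_sum_coeff]
  rw [Finset.sum_eq_single m]
  · rw [Polynomial.coeff_C_mul]
    have hm : ((ascPochhammer ℚ m).comp (X - Polynomial.C (m : ℚ))).Monic :=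
      (monic_ascPochhammer ℚ m).comp_X_sub_C _
    have := hm.coeff_natDegree
    rw [QQ_term_natDegree] at this
    rw [this, mul_one]
  · intro j hj hjm
    rw [Polynomial.coeff_C_mul, Polynomial.coeff_eq_zero_of_natDegree_lt, mul_zero]
    rw [QQ_term_natDegree]
    exact lt_of_le_of_ne (Nat.lt_succ_iff.mp (Finset.mem_range.mp hj)) hjm
  · simp

lemma QQ_degree_le (m : ℕ) : (QQ m).degree ≤ m := by
  unfold QQ
  refine (Polynomial.degree_sum_le _ _).trans ?_
  apply Finset.sup_le
  intro j hj
  refine (Polynomial.degree_mul_le _ _).trans ?_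
  have h1 : (Polynomial.C (cc j)).degree ≤ 0 := Polynomial.degree_C_le
  have h2 : ((ascPochhammer ℚ j).comp (X - Polynomial.C (m : ℚ))).degree ≤ (j : WithBot ℕ) := by
    rw [Polynomial.degree_le_iff_coeff_zero]
    intro k hk
    apply Polynomial.coeff_eq_zero_of_natDegree_lt
    rw [QQ_term_natDegree]
    exact_mod_cast hk
  calc (Polynomial.C (cc j)).degree + ((ascPochhammer ℚ j).comp (X - Polynomial.C (m : ℚ))).degree
      ≤ 0 + (j : WithBot ℕ) := add_le_add h1 h2
    _ = (j : WithBot ℕ) := by rw [zero_add]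
    _ ≤ (m : WithBot ℕ) := by exact_mod_cast Nat.lt_succ_iff.mp (Finset.mem_range.mp hj)

lemma cc_ne (m : ℕ) : cc m ≠ 0 := by
  unfold cc
  positivity

lemma QQ_degree (m : ℕ) : (QQ m).degree = m :=
  Polynomial.degree_eq_of_le_of_coeff_ne_zero (QQ_degree_le m) (by rw [QQ_coeff_top]; exact cc_ne m)

lemma QQ_leadingCoeff (m : ℕ) : (QQ m).leadingCoeff = cc m := by
  rw [Polynomial.leadingCoeff, Polynomial.natDegree_eq_of_degree_eq_some (QQ_degree m), QQ_coeff_top]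

theorem stmt_14 (T : ℕ → ℕ → ℕ)
    (h0 : ∀ n, T n 0 = 2 ^ n) (hn : ∀ n, T n n = 2 ^ n)
    (hrec : ∀ n m, 1 ≤ m → m ≤ n - 1 → T n m = 2 * T (n - 1) (m - 1) + T (n - 1) m) :
    ∀ m : ℕ, ∃ q : Polynomial ℚ, q.degree = m ∧
      q.leadingCoeff = 1 / (2 ^ m * m.factorial) ∧
      ∀ n : ℕ, m ≤ n → (T n (n - m) : ℚ) / 2 ^ n = q.eval (n : ℚ) := by
  have main : ∀ n : ℕ, ∀ m : ℕ, m ≤ n → (T n (n - m) : ℚ) / 2 ^ n = ee m n := by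
    intro n
    induction n with
    | zero =>
      intro m hm
      interval_cases m
      have h := ee_self 0
      push_cast at h ⊢
      simp [hn 0, h]
    | succ n ih =>
      intro m hm
      rcases Nat.eq_zero_or_pos m with rfl | hm1
      · rw [Nat.sub_zero, hn]
        have h1 : ee 0 ((n:ℚ)+1) = 1 := by
          unfold ee; simp [ascPochhammer_zero, cc]
        push_cast
        rw [h1, div_self (by positivity)]
      rcases eq_or_lt_of_le hm with rfl | hmn
      · rw [Nat.sub_self, h0]
        have := ee_self (n+1)
        push_cast at this ⊢
        rw [this, div_self (by positivity)]
      -- 1 ≤ m ≤ n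
      have hmn' : m ≤ n := Nat.lt_succ_iff.mp hmn
      have hk1 : 1 ≤ n + 1 - m := by omega
      have hk2 : n + 1 - m ≤ (n + 1) - 1 := by omega
      have hrw := hrec (n+1) (n+1-m) hk1 hk2
      have e1 : n + 1 - 1 = n := rfl
      have e2 : n + 1 - m - 1 = n - m := by omega
      rw [e1, e2] at hrw
      obtain ⟨m', rfl⟩ : ∃ m', m = m' + 1 := ⟨m - 1, by omega⟩
      have hrw2 : (T (n+1) (n+1-(m'+1)) : ℚ) = 2 * T n (n - (m'+1)) + T n (n - m') := by
        rw [hrw]; push_cast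
        congr 2
      rw [hrw2]
      have ihA := ih (m'+1) (by omega)
      have ihB := ih m' (by omega)
      have hrec2 := ee_succ m' ((n : ℚ) + 1)
      have harg : (n : ℚ) + 1 - 1 = (n : ℚ) := by ring
      rw [harg] at hrec2
      push_cast at ihA ihB hrec2 ⊢
      rw [hrec2, ← ihA, ← ihB]
      have h2n : (2:ℚ) ^ n ≠ 0 := by positivity
      field_simp
      ring
  intro m
  refine ⟨QQ m, QQ_degree m, ?_, ?_⟩
  · rw [QQ_leadingCoeff]; rfl
  · intro n hmn
    rw [QQ_eval]
    exact main n m hmn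
end
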